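/- Let β > 0, let {m_n} be a sequence of positive integers with m_n/n → β, and let Q, Q_1, Q_2, … be probability measures on {0,1,2,…} with Q_n supported on {0,1,…,m_n}, such that Q_n(t) → Q(t) for every t ≥ 0 and Σ_{t≥1} t·Q_n(t) → Σ_{t≥1} t·Q(t) < ∞ as n → ∞. Assume Q(0) = 1. Then N_1(G(n, m_n, Q_n)) = o_P(n), i.e., for every ε > 0, P(N_1(G(n, m_n, Q_n)) ≥ ε n) → 0 as n → ∞. -/

import Mathlib

open Filter MeasureTheory
open scoped ENNReal

/-- The random intersection graph determined by attribute sets `S i`: vertices `i ≠ j`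
are adjacent iff `S i ∩ S j ≠ ∅`. -/
def interGraph {n m : ℕ} (S : Fin n → Finset (Fin m)) : SimpleGraph (Fin n) where
  Adj i j := i ≠ j ∧ (S i ∩ S j).Nonempty
  symm := by
    constructor
    intro i j hij
    exact ⟨hij.1.symm, by rw [Finset.inter_comm]; exact hij.2⟩
  loopless := by
    constructor
    intro i hi
    exact hi.1 rfl

/-- `N₁ G`: the number of vertices in a largest connected component of `G`. -/
noncomputable def largestComponentOrder {V : Type*} [Fintype V] (G : SimpleGraph V) : ℕ := by
  classical
  exact Finset.univ.sup fun v => (Finset.univ.filter fun u => G.Reachable u v).card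

lemma reach_empty {n m : ℕ} (S : Fin n → Finset (Fin m)) {u v : Fin n}
    (h : (interGraph S).Reachable u v) (he : S u = ∅) : u = v := by
  obtain ⟨p⟩ := h
  cases p with
  | nil => rfl
  | cons h' p' => exact absurd h'.2 (by simp [he])

lemma largest_le {n m : ℕ} (S : Fin n → Finset (Fin m)) :
    largestComponentOrder (interGraph S) ≤
      max 1 ((Finset.univ.filter fun i => (S i).Nonempty).card) := by
  classical
  unfold largestComponentOrder
  apply Finset.sup_le
  intro v _
  by_cases hv : (S v).Nonempty
  · refine le_max_of_le_right (Finset.card_le_card ?_)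
    intro u hu
    simp only [Finset.mem_filter, Finset.mem_univ, true_and] at *
    by_cases hue : S u = ∅
    · have := reach_empty S hu hue; subst this; exact absurd hue (by
        simpa [Finset.nonempty_iff_ne_empty] using hv)
    · exact Finset.nonempty_iff_ne_empty.2 hue
  · refine le_max_of_le_left (Finset.card_le_one.2 ?_)
    intro a ha b hb
    simp only [Finset.mem_filter] at ha hb
    have he := Finset.not_nonempty_iff_eq_empty.1 hv
    have ha' := reach_empty S ha.2.symm he
    have hb' := reach_empty S hb.2.symm he
    rw [← ha', ← hb']

/-- (Bloznelis 2010, Theorem 1, degenerate case `Q(0) = 1`): under the standing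
assumptions `mₙ/n → β > 0`, `Qₙ(t) → Q(t)` with convergence of first moments, if
`Q(0) = 1` then the order of the largest component of `G(n, mₙ, Qₙ)` is `o_P(n)`:
for every `ε > 0`, `P(N₁(G(n, mₙ, Qₙ)) ≥ εn) → 0`. -/
theorem stmt_1
    (β : ℝ) (hβ : 0 < β)
    (m : ℕ → ℕ) (hmpos : ∀ n, 0 < m n)
    (hm : Tendsto (fun n => (m n : ℝ) / n) atTop (nhds β))
    (Q : ℕ → ℝ) (Qn : ℕ → ℕ → ℝ)
    (hQnonneg : ∀ t, 0 ≤ Q t) (hQsum : ∑' t, Q t = 1)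
    (hQnnonneg : ∀ n t, 0 ≤ Qn n t) (hQnsum : ∀ n, ∑' t, Qn n t = 1)
    (hQnsupp : ∀ n t, m n < t → Qn n t = 0)
    (hconv : ∀ t, Tendsto (fun n => Qn n t) atTop (nhds (Q t)))
    (hmomQ : Summable fun t : ℕ => (t : ℝ) * Q t)
    (hmom : Tendsto (fun n => ∑' t : ℕ, (t : ℝ) * Qn n t) atTop
      (nhds (∑' t : ℕ, (t : ℝ) * Q t)))
    (hQ0 : Q 0 = 1)
    (Ω : ℕ → Type) (mΩ : ∀ n, MeasurableSpace (Ω n))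
    (P : ∀ n, Measure (Ω n)) (hP : ∀ n, IsProbabilityMeasure (P n))
    (S : ∀ n, Fin n → Ω n → Finset (Fin (m n)))
    (hSmeas : ∀ n (i : Fin n) (A : Finset (Fin (m n))),
      MeasurableSet {ω | S n i ω = A})
    (hdist : ∀ n (i : Fin n) (A : Finset (Fin (m n))),
      P n {ω | S n i ω = A} = ENNReal.ofReal (Qn n A.card / (m n).choose A.card))
    (hindep : ∀ n (A : Fin n → Finset (Fin (m n))),
      P n {ω | ∀ i, S n i ω = A i} = ∏ i, P n {ω | S n i ω = A i}) :
    ∀ ε : ℝ, 0 < ε →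
      Tendsto (fun n =>
          P n {ω | ε * n ≤ (largestComponentOrder (interGraph (fun i => S n i ω)) : ℝ)})
        atTop (nhds 0) := by
  intro ε hε
  have hQ0lim : Tendsto (fun n => Qn n 0) atTop (nhds 1) := hQ0 ▸ hconv 0
  have hlim : Tendsto (fun n => ENNReal.ofReal ((1 - Qn n 0) / ε)) atTop (nhds 0) := by
    have h1 : Tendsto (fun n => (1 - Qn n 0) / ε) atTop (nhds 0) := by
      have := (tendsto_const_nhds (x := (1:ℝ)) (f := atTop)).sub hQ0lim
      simpa using this.div_const ε
    simpa using ENNReal.tendsto_ofReal h1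
  refine tendsto_of_tendsto_of_tendsto_of_le_of_le' tendsto_const_nhds hlim
    (Filter.Eventually.of_forall fun n => zero_le) ?_
  have hev : ∀ᶠ n : ℕ in atTop, 1 < ε * n :=
    (tendsto_natCast_atTop_atTop.const_mul_atTop hε).eventually_gt_atTop 1
  filter_upwards [hev] with n hn
  haveI := hP n
  have hnpos : (0:ℝ) < n := by
    rcases Nat.eq_zero_or_pos n with h | h
    · subst h; simp at hn; linarith
    · exact_mod_cast h
  set q0 := Qn n 0 with hq0def
  have hq0 : 0 ≤ q0 := hQnnonneg n 0
  have hsmeas : ∀ i : Fin n, MeasurableSet {ω | (S n i ω).Nonempty} := by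
    intro i
    have he : {ω | (S n i ω).Nonempty} = {ω | S n i ω = ∅}ᶜ := by
      ext ω; simp [Finset.nonempty_iff_ne_empty]
    rw [he]; exact (hSmeas n i ∅).compl
  have hPs : ∀ i : Fin n, P n {ω | (S n i ω).Nonempty} = 1 - ENNReal.ofReal q0 := by
    intro i
    have h1 : P n {ω | S n i ω = ∅} = ENNReal.ofReal q0 := by
      simpa using hdist n i ∅
    have he : {ω | (S n i ω).Nonempty} = {ω | S n i ω = ∅}ᶜ := by
      ext ω; simp [Finset.nonempty_iff_ne_empty]
    rw [he, prob_compl_eq_one_sub (hSmeas n i ∅), h1]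
  set X : Ω n → ℝ≥0∞ := fun ω =>
      ∑ i : Fin n, Set.indicator {ω' | (S n i ω').Nonempty} (fun _ => (1:ℝ≥0∞)) ω with hX
  have hXmeas : Measurable X :=
    Finset.measurable_sum _ fun i _ => measurable_const.indicator (hsmeas i)
  have hint : ∫⁻ ω, X ω ∂ P n = n * (1 - ENNReal.ofReal q0) := by
    rw [hX]
    rw [lintegral_finset_sum _ fun i _ => measurable_const.indicator (hsmeas i)]
    have h2 : ∀ i : Fin n,
        ∫⁻ ω, Set.indicator {ω' | (S n i ω').Nonempty} (fun _ => (1:ℝ≥0∞)) ω ∂ P n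
          = 1 - ENNReal.ofReal q0 := fun i => by
      rw [lintegral_indicator_const (hsmeas i), one_mul, hPs i]
    rw [Finset.sum_congr rfl fun i _ => h2 i, Finset.sum_const, Finset.card_univ,
      Fintype.card_fin, nsmul_eq_mul]
  have hsub : {ω | ε * n ≤ (largestComponentOrder (interGraph (fun i => S n i ω)) : ℝ)}
      ⊆ {ω | ENNReal.ofReal (ε * n) ≤ X ω} := by
    intro ω hω
    simp only [Set.mem_setOf_eq] at hω ⊢
    have hle := largest_le (fun i => S n i ω)
    set c := (Finset.univ.filter fun i => (S n i ω).Nonempty).card with hc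
    have hmax : (largestComponentOrder (interGraph fun i => S n i ω) : ℝ) ≤ max 1 (c : ℝ) := by
      have := (Nat.cast_le (α := ℝ)).2 hle
      simpa [Nat.cast_max] using this
    have hcn : ε * n ≤ (c : ℝ) := by
      rcases le_max_iff.1 (le_trans hω hmax) with h | h
      · linarith
      · exact h
    have hXc : X ω = (c : ℝ≥0∞) := by
      rw [hX]
      simp only [Set.indicator_apply, Set.mem_setOf_eq]
      rw [Finset.sum_boole]
    rw [hXc, ← ENNReal.ofReal_natCast c]
    exact ENNReal.ofReal_le_ofReal hcn
  have hmar := mul_meas_ge_le_lintegral₀ (μ := P n) hXmeas.aemeasurable (ENNReal.ofReal (ε * n))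
  have key : ENNReal.ofReal (ε * n) *
      P n {ω | ε * n ≤ (largestComponentOrder (interGraph (fun i => S n i ω)) : ℝ)}
      ≤ ENNReal.ofReal (ε * n) * ENNReal.ofReal ((1 - q0) / ε) := by
    refine le_trans (mul_le_mul_right (measure_mono hsub) _) (le_trans hmar ?_)
    rw [hint]
    have h1 : (1:ℝ≥0∞) - ENNReal.ofReal q0 = ENNReal.ofReal (1 - q0) := by
      rw [ENNReal.ofReal_sub _ hq0, ENNReal.ofReal_one]
    rw [h1, ← ENNReal.ofReal_natCast n, ← ENNReal.ofReal_mul (by positivity),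
      ← ENNReal.ofReal_mul (by positivity)]
    apply ENNReal.ofReal_le_ofReal
    have heq : ε * (n:ℝ) * ((1 - q0) / ε) = (n:ℝ) * (1 - q0) := by
      field_simp
    rw [heq]
  have h0 : ENNReal.ofReal (ε * n) ≠ 0 := by
    simp only [ne_eq, ENNReal.ofReal_eq_zero, not_le]
    linarith
  exact (ENNReal.mul_le_mul_iff_right h0 ENNReal.ofReal_ne_top).mp key
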